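/- arXiv:0912.0620 — 2 statements merged into one kernel-verified Lean document; each statement's English description precedes it below -/
import Mathlib

section
/- For a prime p ≡ 1 (mod 6) and nonnegative integer n, define G(n) = 6^{p−1} · ∏_{0≤j≤p−1, j≠(p−1)/6} (1+6j+6np) · ∏_{0≤j≤p−1, j≠(p−1)/3} (1+3j+3np) · ∏_{i=0}^{p−2} (1+i+np)^{−2}. Then G(n) ≡ G(0) ≡ 1 (mod p^2) as p-adic units. -/
set_option linter.unusedSectionVars false
open Finset

/-- Expansion of a product of terms perturbed by a square-zero constant. -/
lemma prod_add_const {R : Type*} [CommRing R] {c : R} (hc : c * c = 0)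
    (s : Finset ℕ) (f : ℕ → R) :
    ∏ j ∈ s, (f j + c) = (∏ j ∈ s, f j) + c * ∑ j ∈ s, ∏ k ∈ s.erase j, f k := by
  classical
  induction s using Finset.induction_on with
  | empty => simp
  | @insert a s ha ih =>
    have hstep : ∑ j ∈ s, ∏ k ∈ (insert a s).erase j, f k
        = ∑ j ∈ s, f a * ∏ k ∈ s.erase j, f k := by
      apply Finset.sum_congr rfl
      intro j hj
      rw [Finset.erase_insert_of_ne (by rintro rfl; exact ha hj),
        Finset.prod_insert (fun h => ha (Finset.mem_of_mem_erase h))]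
    rw [Finset.prod_insert ha, Finset.prod_insert ha, Finset.sum_insert ha, ih,
      Finset.erase_insert ha, hstep, ← Finset.mul_sum]
    linear_combination (∑ j ∈ s, ∏ k ∈ s.erase j, f k) * hc

lemma prod_grp {M : Type*} [CommMonoid M] (a : ℕ) (f : ℕ → M) :
    ∀ m : ℕ, ∏ x ∈ range (a*m), f x = ∏ j ∈ range m, ∏ r ∈ range a, f (a*j+r)
  | 0 => by simp
  | (m+1) => by
      rw [Nat.mul_succ, Finset.prod_range_add, prod_grp a f m, Finset.prod_range_succ]

lemma prod_reflect {M : Type*} [CommMonoid M] {p : ℕ} (j0 : ℕ) (hj0 : j0 < p) (f : ℕ → M) :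
    ∏ j ∈ (range p).erase (p-1-j0), f j = ∏ j ∈ (range p).erase j0, f (p-1-j) := by
  apply Finset.prod_bij' (i := fun j _ => p-1-j) (j := fun j _ => p-1-j)
  · intro a ha
    simp only [mem_erase, mem_range] at ha ⊢
    omega
  · intro a ha
    simp only [mem_erase, mem_range] at ha ⊢
    omega
  · intro a ha
    simp only [mem_erase, mem_range] at ha
    omega
  · intro a ha
    simp only [mem_erase, mem_range] at ha
    omega
  · intro a ha
    simp only [mem_erase, mem_range] at ha
    rw [show p-1-(p-1-a) = a by omega]

section ZModP
variable {p : ℕ} [hp : Fact p.Prime]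

lemma zmod_sum_univ (hp2 : 2 < p) : ∑ x : ZMod p, x = 0 := by
  have h : ∑ x : ZMod p, x = ∑ x : ZMod p, -x :=
    (Fintype.sum_equiv (Equiv.neg (ZMod p)) (fun x => -x) (fun x => x) (fun x => by simp)).symm
  rw [Finset.sum_neg_distrib] at h
  have h2 : (2 : ZMod p) * ∑ x : ZMod p, x = 0 := by linear_combination h
  have hne : (2 : ZMod p) ≠ 0 := by
    intro hc
    have : ((2:ℕ) : ZMod p) = 0 := by exact_mod_cast hc
    rw [ZMod.natCast_eq_zero_iff] at this
    have := Nat.le_of_dvd (by norm_num) this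
    omega
  rcases mul_eq_zero.1 h2 with h' | h'
  · exact absurd h' hne
  · exact h'

lemma range_erase_last (n : ℕ) : (range (n+1)).erase n = range n := by
  rw [Finset.range_add_one, Finset.erase_insert (by simp)]

lemma range_erase_pred {p : ℕ} (h : 1 ≤ p) : (range p).erase (p-1) = range (p-1) := by
  have := range_erase_last (p-1)
  rwa [show p-1+1 = p by omega] at this

lemma hz_of_nat (a d j0 : ℕ) (h : p ∣ (a + d*j0)) : (a:ZMod p) + d*j0 = 0 := by
  have h2 : ((a + d*j0 : ℕ) : ZMod p) = 0 := (ZMod.natCast_eq_zero_iff _ _).2 h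
  push_cast at h2
  linear_combination h2

lemma term_ne_zero (a d j0 : ℕ) (hd : ¬ p ∣ d) (hj0 : j0 < p)
    (hz : (a : ZMod p) + d * j0 = 0) {j : ℕ}
    (hj : j ∈ (range p).erase j0) : (a : ZMod p) + d * j ≠ 0 := by
  obtain ⟨hjne, hjr⟩ := Finset.mem_erase.1 hj
  rw [Finset.mem_range] at hjr
  intro h
  have hd' : (d : ZMod p) ≠ 0 := by
    rwa [Ne, ZMod.natCast_eq_zero_iff]
  have hmul : (d:ZMod p) * j = (d:ZMod p) * j0 := by linear_combination h - hz
  have hjj : (j : ZMod p) = (j0 : ZMod p) := mul_left_cancel₀ hd' hmul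
  have hval := congrArg ZMod.val hjj
  rw [ZMod.val_cast_of_lt hjr, ZMod.val_cast_of_lt hj0] at hval
  exact hjne hval

lemma inj_on_term (a d j0 : ℕ) (hd : ¬ p ∣ d) :
    ∀ x ∈ (range p).erase j0, ∀ y ∈ (range p).erase j0,
    ((a : ZMod p) + d * x) = ((a : ZMod p) + d * y) → x = y := by
  intro x hx y hy h
  have hd' : (d : ZMod p) ≠ 0 := by
    rwa [Ne, ZMod.natCast_eq_zero_iff]
  have hmul : (d:ZMod p) * x = (d:ZMod p) * y := by linear_combination h
  have hxy : (x : ZMod p) = (y : ZMod p) := mul_left_cancel₀ hd' hmul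
  have hval := congrArg ZMod.val hxy
  rw [ZMod.val_cast_of_lt (mem_range.1 (mem_of_mem_erase hx)),
    ZMod.val_cast_of_lt (mem_range.1 (mem_of_mem_erase hy))] at hval
  exact hval

lemma image_term_eq (a d j0 : ℕ) (hd : ¬ p ∣ d) (hj0 : j0 < p)
    (hz : (a : ZMod p) + d * j0 = 0) :
    ((range p).erase j0).image (fun j : ℕ => (a:ZMod p) + (d:ZMod p) * (j:ZMod p))
      = Finset.univ.erase (0 : ZMod p) := by
  apply Finset.eq_of_subset_of_card_le
  · intro x hx
    obtain ⟨j, hj, rfl⟩ := Finset.mem_image.1 hx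
    exact Finset.mem_erase.2 ⟨term_ne_zero a d j0 hd hj0 hz hj, Finset.mem_univ _⟩
  · rw [Finset.card_erase_of_mem (Finset.mem_univ 0),
      Finset.card_image_of_injOn (fun x hx y hy h =>
        inj_on_term a d j0 hd x (Finset.mem_coe.1 hx) y (Finset.mem_coe.1 hy) h),
      Finset.card_erase_of_mem (Finset.mem_range.2 hj0), Finset.card_range,
      Finset.card_univ, ZMod.card]

lemma univ_erase_prod : ∏ x ∈ Finset.univ.erase (0 : ZMod p), x = -1 := by
  have h1le : 1 ≤ p := hp.1.one_lt.le
  have hd1 : ¬ p ∣ 1 := by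
    rw [Nat.dvd_one]; exact hp.1.ne_one
  have hj0 : p - 1 < p := by omega
  have hz : ((1:ℕ):ZMod p) + ((1:ℕ):ZMod p) * ((p-1 : ℕ) : ZMod p) = 0 :=
    hz_of_nat 1 1 (p-1) (by rw [show 1 + 1*(p-1) = p by omega])
  have himg := image_term_eq (p := p) 1 1 (p-1) hd1 hj0 hz
  have hPI := Finset.prod_image (s := (range p).erase (p-1))
    (g := fun j : ℕ => ((1:ℕ):ZMod p) + ((1:ℕ):ZMod p) * (j:ZMod p))
    (f := fun x : ZMod p => x)
    (fun x hx y hy h => inj_on_term 1 1 (p-1) hd1 x hx y hy h)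
  rw [himg] at hPI
  rw [hPI]
  rw [range_erase_pred h1le] at hPI ⊢
  have hcast : ∏ j ∈ range (p-1), (((1:ℕ):ZMod p) + ((1:ℕ):ZMod p) * (j:ZMod p))
      = ((∏ j ∈ range (p-1), (j+1) : ℕ) : ZMod p) := by
    push_cast
    exact Finset.prod_congr rfl (fun j _ => by ring)
  rw [hcast, Finset.prod_range_add_one_eq_factorial]
  exact ZMod.wilsons_lemma p

lemma prod_term_eq_neg_one (a d j0 : ℕ) (hd : ¬ p ∣ d) (hj0 : j0 < p)
    (hz : (a : ZMod p) + d * j0 = 0) :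
    ∏ j ∈ (range p).erase j0, ((a:ZMod p) + d * j) = -1 := by
  have hPI := Finset.prod_image (s := (range p).erase j0)
    (g := fun j : ℕ => (a:ZMod p) + (d:ZMod p) * (j:ZMod p))
    (f := fun x : ZMod p => x)
    (fun x hx y hy h => inj_on_term a d j0 hd x hx y hy h)
  rw [image_term_eq a d j0 hd hj0 hz] at hPI
  rw [← hPI, univ_erase_prod]

lemma sum_prod_erase_zero (a d j0 : ℕ) (hd : ¬ p ∣ d) (hj0 : j0 < p)
    (hp2 : 2 < p) (hz : (a : ZMod p) + d * j0 = 0) :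
    ∑ j ∈ (range p).erase j0, ∏ k ∈ ((range p).erase j0).erase j, ((a:ZMod p) + d * k)
      = 0 := by
  set s := (range p).erase j0 with hs
  set t : ℕ → ZMod p := fun j => (a:ZMod p) + d * j with ht
  have hprod : ∀ j ∈ s, ∏ k ∈ s.erase j, t k = (t j)⁻¹ * (-1) := by
    intro j hj
    have h := Finset.mul_prod_erase s t hj
    rw [prod_term_eq_neg_one a d j0 hd hj0 hz] at h
    have hne : t j ≠ 0 := term_ne_zero a d j0 hd hj0 hz hj
    have h2 := congrArg (fun z => (t j)⁻¹ * z) h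
    simpa [← mul_assoc, inv_mul_cancel₀ hne] using h2
  rw [Finset.sum_congr rfl hprod]
  have h1 : ∑ j ∈ s, (t j)⁻¹ * (-1) = -∑ j ∈ s, (t j)⁻¹ := by
    rw [← Finset.sum_neg_distrib]
    exact Finset.sum_congr rfl (fun j _ => by ring)
  rw [h1]
  have h2 : ∑ j ∈ s, (t j)⁻¹ = ∑ x ∈ Finset.univ.erase (0 : ZMod p), x⁻¹ := by
    have hSI := Finset.sum_image (s := (range p).erase j0)
      (g := fun j : ℕ => (a:ZMod p) + (d:ZMod p) * (j:ZMod p))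
      (f := fun x : ZMod p => x⁻¹)
      (fun x hx y hy h => inj_on_term a d j0 hd x hx y hy h)
    rw [image_term_eq a d j0 hd hj0 hz] at hSI
    rw [← hSI]
  have h3 : ∑ x ∈ Finset.univ.erase (0 : ZMod p), x⁻¹ = ∑ x : ZMod p, x⁻¹ :=
    Finset.sum_erase _ (by simp)
  have h4 : ∑ x : ZMod p, x⁻¹ = ∑ x : ZMod p, x :=
    Fintype.sum_bijective (fun x : ZMod p => x⁻¹) inv_involutive.bijective _ _
      (fun x => rfl)
  rw [h2, h3, h4, zmod_sum_univ hp2, neg_zero]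

end ZModP

section IntLevel
variable {p : ℕ} [hp : Fact p.Prime]




lemma int_prod_mod (a d j0 : ℕ) (hd : ¬ p ∣ d) (hj0 : j0 < p)
    (hz : p ∣ (a + d*j0)) :
    ((∏ j ∈ (range p).erase j0, ((a:ℤ) + d * j) : ℤ) : ZMod p) = -1 := by
  have h := prod_term_eq_neg_one a d j0 hd hj0 (hz_of_nat a d j0 hz)
  push_cast
  rw [← h]

lemma int_sum_dvd (a d j0 : ℕ) (hd : ¬ p ∣ d) (hj0 : j0 < p)
    (hp2 : 2 < p) (hz : p ∣ (a + d*j0)) :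
    (p:ℤ) ∣ ∑ j ∈ (range p).erase j0,
      ∏ k ∈ ((range p).erase j0).erase j, ((a:ℤ) + d * k) := by
  have h := sum_prod_erase_zero a d j0 hd hj0 hp2 (hz_of_nat a d j0 hz)
  rw [← ZMod.intCast_zmod_eq_zero_iff_dvd]
  push_cast
  rw [← h]

/-- Every integer not divisible by `p` becomes a unit in `ZMod (p^2)`. -/
lemma isUnit_cast {x : ℤ} (hx : ¬ (p:ℤ) ∣ x) : IsUnit ((x : ℤ) : ZMod (p^2)) := by
  have hpr : Prime (p:ℤ) := Int.prime_iff_natAbs_prime.2 (by simpa using hp.1)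
  have hco : IsCoprime ((p:ℤ)^2) x := (hpr.coprime_iff_not_dvd.2 hx).pow_left
  obtain ⟨u, v, huv⟩ := hco
  have hcast := congrArg (fun z : ℤ => (z : ZMod (p^2))) huv
  push_cast at hcast
  have hp20 : ((p : ZMod (p^2)))^2 = 0 := by
    have := ZMod.natCast_self (p^2)
    push_cast at this
    exact this
  rw [hp20] at hcast
  exact IsUnit.of_mul_eq_one (v : ZMod (p^2)) (by linear_combination hcast)

lemma padic_norm_le {a b : ℤ} (hd : (p:ℤ)^2 ∣ a) (hb : ¬ (p:ℤ) ∣ b) :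
    padicNorm p ((a : ℚ) / (b : ℚ)) ≤ (p:ℚ) ^ (-(2:ℤ)) := by
  have hp1 : 1 < p := hp.1.one_lt
  have hppos : (0:ℚ) < (p:ℚ) := by exact_mod_cast hp.1.pos
  have hgoalpos : (0:ℚ) < (p:ℚ) ^ (-(2:ℤ)) := zpow_pos hppos _
  obtain ⟨m, rfl⟩ := hd
  rcases eq_or_ne m 0 with rfl | hm
  · simp only [mul_zero, Int.cast_zero, zero_div, padicNorm.zero]
    exact le_of_lt hgoalpos
  · rw [padicNorm.div, (padicNorm.int_eq_one_iff b).2 hb, div_one]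
    have hsplit : (((p:ℤ)^2 * m : ℤ) : ℚ) = (p:ℚ) * ((p:ℚ) * (m:ℚ)) := by push_cast; ring
    rw [hsplit, padicNorm.mul, padicNorm.mul, padicNorm.padicNorm_p hp1]
    have h2 : padicNorm p (m:ℚ) ≤ 1 := padicNorm.of_int m
    have h3 : 0 ≤ padicNorm p (m:ℚ) := padicNorm.nonneg _
    have hinv : 0 < ((p:ℚ))⁻¹ := by positivity
    have hrw : (p:ℚ) ^ (-(2:ℤ)) = (p:ℚ)⁻¹ * ((p:ℚ)⁻¹ * 1) := by
      rw [mul_one, ← zpow_neg_one, ← zpow_add₀ (ne_of_gt hppos)]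
      norm_num
    rw [hrw]
    apply mul_le_mul_of_nonneg_left _ (le_of_lt hinv)
    apply mul_le_mul_of_nonneg_left h2 (le_of_lt hinv)

end IntLevel

section P2
variable {p : ℕ} [hp : Fact p.Prime]

lemma pp_zero : ((p : ZMod (p^2))) * (p : ZMod (p^2)) = 0 := by
  have h := ZMod.natCast_self (p^2)
  push_cast at h
  linear_combination h

lemma prod_cast_shift (a d j0 : ℕ) (hd : ¬ p ∣ d) (hj0 : j0 < p) (hp2 : 2 < p)
    (hz : p ∣ (a + d*j0)) (e : ZMod (p^2)) :
    ∏ j ∈ (range p).erase j0,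
        (((a : ℕ) : ZMod (p^2)) + ((d : ℕ) : ZMod (p^2)) * (j : ZMod (p^2))
          + ((p : ℕ) : ZMod (p^2)) * e)
      = ∏ j ∈ (range p).erase j0,
        (((a : ℕ) : ZMod (p^2)) + ((d : ℕ) : ZMod (p^2)) * (j : ZMod (p^2))) := by
  have hc : (((p : ZMod (p^2))) * e) * (((p : ZMod (p^2))) * e) = 0 := by
    linear_combination (e*e) * (pp_zero (p := p))
  have hrw : ∏ j ∈ (range p).erase j0,
      (((a : ℕ) : ZMod (p^2)) + ((d : ℕ) : ZMod (p^2)) * (j : ZMod (p^2))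
        + ((p : ℕ) : ZMod (p^2)) * e)
      = ∏ j ∈ (range p).erase j0,
      ((fun j : ℕ => ((a : ℕ) : ZMod (p^2)) + ((d : ℕ) : ZMod (p^2)) * (j : ZMod (p^2))) j
        + ((p : ZMod (p^2))) * e) := rfl
  rw [hrw, prod_add_const hc]
  obtain ⟨t, ht⟩ := int_sum_dvd a d j0 hd hj0 hp2 hz
  have hcast := congrArg (fun z : ℤ => (z : ZMod (p^2))) ht
  push_cast at hcast
  rw [hcast]
  linear_combination (e * (t : ZMod (p^2))) * (pp_zero (p := p))

end P2
/-- For a prime `p ≡ 1 (mod 6)` and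
`G(n) = 6^{p-1} ∏_{0≤j≤p-1, j≠(p-1)/6} (1+6j+6np) ∏_{0≤j≤p-1, j≠(p-1)/3} (1+3j+3np)
  ∏_{i=0}^{p-2} (1+i+np)^{-2}`, we have `G(n) ≡ G(0) ≡ 1 (mod p^2)`. -/
theorem G_cong_one (p : ℕ) (hp : p.Prime) (h6 : p % 6 = 1)
    (G : ℕ → ℚ)
    (hG : ∀ n, G n = (6 : ℚ) ^ (p - 1)
      * (∏ j ∈ (Finset.range p).erase ((p - 1) / 6), (1 + 6 * (j : ℚ) + 6 * n * p))
      * (∏ j ∈ (Finset.range p).erase ((p - 1) / 3), (1 + 3 * (j : ℚ) + 3 * n * p))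
      * (∏ i ∈ Finset.range (p - 1), ((1 + (i : ℚ) + n * p)⁻¹) ^ 2))
    (n : ℕ) :
    padicNorm p (G n - G 0) ≤ (p : ℚ) ^ (-(2 : ℤ)) ∧
      padicNorm p (G 0 - 1) ≤ (p : ℚ) ^ (-(2 : ℤ)) := by
  haveI hpf : Fact p.Prime := ⟨hp⟩
  have hple : 2 ≤ p := hp.two_le
  have hp7 : 7 ≤ p := by omega
  have hp2 : 2 < p := by omega
  have hpz : (p:ℤ) ≠ 0 := by exact_mod_cast hp.pos.ne'
  have hpr : Prime (p:ℤ) := Int.prime_iff_natAbs_prime.2 (by simpa using hp)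
  have hnd : ∀ d:ℕ, 0 < d → d < p → ¬ p ∣ d := fun d h1 h2 hdvd =>
    absurd (Nat.le_of_dvd h1 hdvd) (by omega)
  have hd1 : ¬ p ∣ 1 := hnd 1 (by norm_num) (by omega)
  have hd2 : ¬ p ∣ 2 := hnd 2 (by norm_num) (by omega)
  have hd3 : ¬ p ∣ 3 := hnd 3 (by norm_num) (by omega)
  have hd6 : ¬ p ∣ 6 := hnd 6 (by norm_num) (by omega)
  -- special indices
  set j6 := (p - 1) / 6 with hj6def
  set j3 := (p - 1) / 3 with hj3def
  set j5 := p - 1 - j6 with hj5def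
  set j3' := p - 1 - j3 with hj3'def
  set jh := (p - 1) / 2 with hjhdef
  have hj6p : 1 + 6 * j6 = p := by omega
  have hj3p : 1 + 3 * j3 = p := by omega
  have hj5p : 5 + 6 * j5 = 5 * p := by omega
  have hj3'p : 2 + 3 * j3' = 2 * p := by omega
  have hjhp : 1 + 2 * jh = p := by omega
  have hj6lt : j6 < p := by omega
  have hj3lt : j3 < p := by omega
  have hj5lt : j5 < p := by omega
  have hj3'lt : j3' < p := by omega
  have hjhlt : jh < p := by omega
  set P1 := p - 1 with hP1def
  have hP1 : p = P1 + 1 := by omega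
  -- integer products
  set s6 : Finset ℕ := (Finset.range p).erase j6 with hs6
  set s3 : Finset ℕ := (Finset.range p).erase j3 with hs3
  set A6 : ℤ := ∏ j ∈ s6, (1 + 6 * (j:ℤ)) with hA6
  set A3 : ℤ := ∏ j ∈ s3, (1 + 3 * (j:ℤ)) with hA3
  set B5 : ℤ := ∏ j ∈ (Finset.range p).erase j5, (5 + 6 * (j:ℤ)) with hB5
  set A3' : ℤ := ∏ j ∈ (Finset.range p).erase j3', (2 + 3 * (j:ℤ)) with hA3'
  set Od : ℤ := ∏ j ∈ (Finset.range p).erase jh, (1 + 2 * (j:ℤ)) with hOd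
  set W : ℤ := ∏ i ∈ Finset.range P1, (1 + (i:ℤ)) with hW
  set Bl : ℕ → ℤ := fun k => ∏ i ∈ Finset.range P1, (1 + (i:ℤ) + p * k) with hBldef
  set N : ℕ → ℤ := fun m => 6^P1 * (∏ j ∈ s6, (1 + 6*(j:ℤ) + 6*m*p))
      * (∏ j ∈ s3, (1 + 3*(j:ℤ) + 3*m*p)) with hNdef
  set Dh : ℕ → ℤ := fun m => ∏ i ∈ Finset.range P1, (1 + (i:ℤ) + m*p) with hDhdef
  -- G in terms of integer products
  have hDh_pos : ∀ m : ℕ, (0:ℤ) < Dh m := by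
    intro m
    apply Finset.prod_pos
    intro i _
    positivity
  have hDh_ne : ∀ m : ℕ, ((Dh m : ℤ):ℚ) ≠ 0 := fun m =>
    Int.cast_ne_zero.2 (ne_of_gt (hDh_pos m))
  have hGeq : ∀ m : ℕ, G m = ((N m : ℤ):ℚ) / ((Dh m : ℤ):ℚ)^2 := by
    intro m
    rw [hG m]
    have hinv : ∏ i ∈ Finset.range P1, ((1 + (i:ℚ) + m*p)⁻¹)^2
        = ((∏ i ∈ Finset.range P1, (1 + (i:ℚ) + m*p))^2)⁻¹ := by
      rw [← Finset.prod_pow, ← Finset.prod_inv_distrib]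
      exact Finset.prod_congr rfl fun i _ => by rw [inv_pow]
    rw [hinv]
    have hNcast : ((N m : ℤ):ℚ) = (6:ℚ)^P1 * (∏ j ∈ s6, (1 + 6*(j:ℚ) + 6*m*p))
        * (∏ j ∈ s3, (1 + 3*(j:ℚ) + 3*m*p)) := by
      simp only [hNdef]
      push_cast
      rfl
    have hDcast : ((Dh m : ℤ):ℚ) = ∏ i ∈ Finset.range P1, (1 + (i:ℚ) + m*p) := by
      simp only [hDhdef]
      push_cast
      rfl
    rw [← hNcast, ← hDcast, div_eq_mul_inv]
  -- the shift machinery mod p^2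
  have key : ∀ (a d j0 : ℕ), ¬ p ∣ d → j0 < p → p ∣ (a + d*j0) → ∀ e : ZMod (p^2),
      ∏ j ∈ (Finset.range p).erase j0,
          ((a : ZMod (p^2)) + (d : ZMod (p^2)) * (j : ZMod (p^2)) + (p : ZMod (p^2)) * e)
        = ∏ j ∈ (Finset.range p).erase j0,
          ((a : ZMod (p^2)) + (d : ZMod (p^2)) * (j : ZMod (p^2))) :=
    fun a d j0 hd hj0' hz e => prod_cast_shift a d j0 hd hj0' hp2 hz e
  -- constancy of N and Dh mod p^2
  have hshift6 : ∀ m : ℕ, (∏ j ∈ s6, ((1:ZMod (p^2)) + 6*(j:ZMod (p^2)) + 6*(m:ZMod (p^2))*(p:ZMod (p^2))))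
      = ∏ j ∈ s6, ((1:ZMod (p^2)) + 6*(j:ZMod (p^2))) := by
    intro m
    have h := key 1 6 j6 hd6 hj6lt ⟨1, by omega⟩ ((6*m : ℕ) : ZMod (p^2))
    rw [← hs6] at h
    push_cast at h
    exact (Finset.prod_congr rfl fun j _ => by ring).trans
      (h.trans (Finset.prod_congr rfl fun j _ => by ring))
  have hshift3 : ∀ m : ℕ, (∏ j ∈ s3, ((1:ZMod (p^2)) + 3*(j:ZMod (p^2)) + 3*(m:ZMod (p^2))*(p:ZMod (p^2))))
      = ∏ j ∈ s3, ((1:ZMod (p^2)) + 3*(j:ZMod (p^2))) := by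
    intro m
    have h := key 1 3 j3 hd3 hj3lt ⟨1, by omega⟩ ((3*m : ℕ) : ZMod (p^2))
    rw [← hs3] at h
    push_cast at h
    exact (Finset.prod_congr rfl fun j _ => by ring).trans
      (h.trans (Finset.prod_congr rfl fun j _ => by ring))
  have hNR : ∀ m : ℕ, ((N m : ℤ) : ZMod (p^2)) = ((N 0 : ℤ) : ZMod (p^2)) := by
    have hcast : ∀ m : ℕ, ((N m : ℤ) : ZMod (p^2)) = (6:ZMod (p^2))^P1
        * (∏ j ∈ s6, ((1:ZMod (p^2)) + 6*(j:ZMod (p^2)) + 6*(m:ZMod (p^2))*(p:ZMod (p^2))))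
        * (∏ j ∈ s3, ((1:ZMod (p^2)) + 3*(j:ZMod (p^2)) + 3*(m:ZMod (p^2))*(p:ZMod (p^2)))) := by
      intro m
      simp only [hNdef]
      push_cast
      rfl
    intro m
    rw [hcast m, hcast 0, hshift6 m, hshift6 0, hshift3 m, hshift3 0]
  have hrangeP1 : (Finset.range p).erase (p-1) = Finset.range P1 := by
    rw [hP1def]
    exact range_erase_pred (by omega)
  have hWcast2 : ((W : ℤ) : ZMod (p^2)) = ∏ i ∈ Finset.range P1, ((1:ZMod (p^2)) + (i:ZMod (p^2))) := by
    rw [hW]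
    push_cast
    rfl
  have hshift1 : ∀ e : ZMod (p^2), (∏ i ∈ Finset.range P1, ((1:ZMod (p^2)) + (i:ZMod (p^2)) + (p:ZMod (p^2))*e))
      = ∏ i ∈ Finset.range P1, ((1:ZMod (p^2)) + (i:ZMod (p^2))) := by
    intro e
    have h := key 1 1 (p-1) hd1 (by omega) ⟨1, by omega⟩ e
    rw [hrangeP1] at h
    push_cast at h
    exact (Finset.prod_congr rfl fun j _ => by ring).trans
      (h.trans (Finset.prod_congr rfl fun j _ => by ring))
  have hDhR : ∀ m : ℕ, ((Dh m : ℤ) : ZMod (p^2)) = ((W : ℤ) : ZMod (p^2)) := by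
    intro m
    have hcast : ((Dh m : ℤ) : ZMod (p^2))
        = ∏ i ∈ Finset.range P1, ((1:ZMod (p^2)) + (i:ZMod (p^2)) + (p:ZMod (p^2))*(m:ZMod (p^2))) := by
      simp only [hDhdef]
      push_cast
      exact Finset.prod_congr rfl fun i _ => by ring
    rw [hcast, hshift1 ((m:ℕ) : ZMod (p^2)), hWcast2]
  -- block congruences
  have hBlR : ∀ k : ℕ, ((Bl k : ℤ) : ZMod (p^2)) = ((W : ℤ) : ZMod (p^2)) := by
    intro k
    have hcast : ((Bl k : ℤ) : ZMod (p^2))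
        = ∏ i ∈ Finset.range P1, ((1:ZMod (p^2)) + (i:ZMod (p^2)) + (p:ZMod (p^2))*(k:ZMod (p^2))) := by
      simp only [hBldef]
      push_cast
      exact Finset.prod_congr rfl fun i _ => by ring
    rw [hcast, hshift1 ((k:ℕ) : ZMod (p^2)), hWcast2]
  -- reflection congruences
  have hA6cast : ((A6 : ℤ) : ZMod (p^2)) = ∏ j ∈ s6, ((1:ZMod (p^2)) + 6*(j:ZMod (p^2))) := by
    rw [hA6]; push_cast; rfl
  have hA3cast : ((A3 : ℤ) : ZMod (p^2)) = ∏ j ∈ s3, ((1:ZMod (p^2)) + 3*(j:ZMod (p^2))) := by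
    rw [hA3]; push_cast; rfl
  have hevenP1 : Even P1 := ⟨(p-1)/2, by omega⟩
  have hB5R : ((B5 : ℤ) : ZMod (p^2)) = ((A6 : ℤ) : ZMod (p^2)) := by
    have hrefl : B5 = ∏ j ∈ s6, (5 + 6 * ((p-1-j : ℕ) : ℤ)) := by
      rw [hB5, hj5def, hP1def, hs6]
      exact prod_reflect j6 hj6lt (fun m => 5 + 6*(m:ℤ))
    have h2 : ((B5:ℤ) : ZMod (p^2))
        = ∏ j ∈ s6, ((-1) * ((1:ZMod (p^2)) + 6*(j:ZMod (p^2)) + (p:ZMod (p^2)) * (-6))) := by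
      rw [hrefl]
      push_cast
      refine Finset.prod_congr rfl fun j hj => ?_
      have hjlt : j < p := Finset.mem_range.1 (Finset.mem_of_mem_erase (by rw [hs6] at hj; exact hj))
      rw [Nat.cast_sub (by omega : j ≤ p - 1), Nat.cast_sub (by omega : 1 ≤ p)]
      push_cast
      ring
    rw [h2, Finset.prod_mul_distrib, Finset.prod_const]
    have hcard : s6.card = P1 := by
      rw [hs6, Finset.card_erase_of_mem (Finset.mem_range.2 hj6lt), Finset.card_range, hP1def]
    rw [hcard, hevenP1.neg_one_pow, one_mul]
    have h := key 1 6 j6 hd6 hj6lt ⟨1, by omega⟩ (-6 : ZMod (p^2))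
    rw [← hs6] at h
    push_cast at h
    rw [hA6cast]
    exact (Finset.prod_congr rfl fun j _ => by ring).trans
      (h.trans (Finset.prod_congr rfl fun j _ => by ring))
  have hA3'R : ((A3' : ℤ) : ZMod (p^2)) = ((A3 : ℤ) : ZMod (p^2)) := by
    have hrefl : A3' = ∏ j ∈ s3, (2 + 3 * ((p-1-j : ℕ) : ℤ)) := by
      rw [hA3', hj3'def, hP1def, hs3]
      exact prod_reflect j3 hj3lt (fun m => 2 + 3*(m:ℤ))
    have h2 : ((A3':ℤ) : ZMod (p^2))
        = ∏ j ∈ s3, ((-1) * ((1:ZMod (p^2)) + 3*(j:ZMod (p^2)) + (p:ZMod (p^2)) * (-3))) := by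
      rw [hrefl]
      push_cast
      refine Finset.prod_congr rfl fun j hj => ?_
      have hjlt : j < p := Finset.mem_range.1 (Finset.mem_of_mem_erase (by rw [hs3] at hj; exact hj))
      rw [Nat.cast_sub (by omega : j ≤ p - 1), Nat.cast_sub (by omega : 1 ≤ p)]
      push_cast
      ring
    rw [h2, Finset.prod_mul_distrib, Finset.prod_const]
    have hcard : s3.card = P1 := by
      rw [hs3, Finset.card_erase_of_mem (Finset.mem_range.2 hj3lt), Finset.card_range, hP1def]
    rw [hcard, hevenP1.neg_one_pow, one_mul]
    have h := key 1 3 j3 hd3 hj3lt ⟨1, by omega⟩ (-3 : ZMod (p^2))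
    rw [← hs3] at h
    push_cast at h
    rw [hA3cast]
    exact (Finset.prod_congr rfl fun j _ => by ring).trans
      (h.trans (Finset.prod_congr rfl fun j _ => by ring))
  -- integer identities from factorial decompositions
  -- generic tools for factorial decompositions
  have hpull : ∀ (c : ℤ) (g : ℕ → ℤ), (∏ j ∈ Finset.range p, (c * g j)) = c^p * ∏ j ∈ Finset.range p, g j := by
    intro c g
    rw [Finset.prod_mul_distrib, Finset.prod_const, Finset.card_range]
  have herase : ∀ (c e : ℤ) (j0 : ℕ), j0 < p →
      (∏ j ∈ Finset.range p, (c + e*(j:ℤ)))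
        = (c + e*(j0:ℤ)) * ∏ j ∈ (Finset.range p).erase j0, (c + e*(j:ℤ)) := by
    intro c e j0 h
    exact (Finset.mul_prod_erase _ _ (Finset.mem_range.2 h)).symm
  have hrange' : Finset.range p = Finset.range (P1+1) := by rw [← hP1]
  have hP1cast : ((P1:ℤ) + 1) = (p:ℤ) := by exact_mod_cast hP1.symm
  have hWp : ∏ j ∈ Finset.range p, (1+(j:ℤ)) = W * (p:ℤ) := by
    rw [hrange', Finset.prod_range_succ, ← hW]
    congr 1
    linear_combination hP1cast
  have hinner : ∀ k : ℕ, (∏ i ∈ Finset.range p, (((p*k+i : ℕ):ℤ)+1)) = Bl k * ((p:ℤ)*((k:ℤ)+1)) := by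
    intro k
    rw [hrange', Finset.prod_range_succ]
    have h1 : ∏ i ∈ Finset.range P1, (((p*k+i : ℕ):ℤ)+1) = Bl k := by
      simp only [hBldef]
      exact Finset.prod_congr rfl fun i _ => by push_cast; ring
    have h2 : (((p*k+P1 : ℕ):ℤ)+1) = (p:ℤ)*((k:ℤ)+1) := by
      push_cast
      linear_combination hP1cast
    rw [h1, h2]
  -- class side evaluations
  have hc1 : ∏ j ∈ Finset.range p, (1+6*(j:ℤ)) = (p:ℤ) * A6 := by
    rw [herase 1 6 j6 hj6lt, ← hs6, ← hA6]
    congr 1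
    exact_mod_cast hj6p
  have hc2 : ∏ j ∈ Finset.range p, (2+6*(j:ℤ)) = 2^p * ((p:ℤ) * A3) := by
    rw [show (∏ j ∈ Finset.range p, (2+6*(j:ℤ))) = ∏ j ∈ Finset.range p, (2*(1+3*(j:ℤ))) from
      Finset.prod_congr rfl fun j _ => by ring, hpull 2 _, herase 1 3 j3 hj3lt, ← hs3, ← hA3]
    congr 2
    exact_mod_cast hj3p
  have hc3 : ∏ j ∈ Finset.range p, (3+6*(j:ℤ)) = 3^p * ((p:ℤ) * Od) := by
    rw [show (∏ j ∈ Finset.range p, (3+6*(j:ℤ))) = ∏ j ∈ Finset.range p, (3*(1+2*(j:ℤ))) from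
      Finset.prod_congr rfl fun j _ => by ring, hpull 3 _, herase 1 2 jh hjhlt, ← hOd]
    congr 2
    exact_mod_cast hjhp
  have hc4 : ∏ j ∈ Finset.range p, (4+6*(j:ℤ)) = 2^p * ((2*(p:ℤ)) * A3') := by
    rw [show (∏ j ∈ Finset.range p, (4+6*(j:ℤ))) = ∏ j ∈ Finset.range p, (2*(2+3*(j:ℤ))) from
      Finset.prod_congr rfl fun j _ => by ring, hpull 2 _, herase 2 3 j3' hj3'lt, ← hA3']
    congr 2
    exact_mod_cast hj3'p
  have hc5 : ∏ j ∈ Finset.range p, (5+6*(j:ℤ)) = (5*(p:ℤ)) * B5 := by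
    rw [herase 5 6 j5 hj5lt, ← hB5]
    congr 1
    exact_mod_cast hj5p
  have hc6 : ∏ j ∈ Finset.range p, (6+6*(j:ℤ)) = 2^p * (3^p * (W * (p:ℤ))) := by
    rw [show (∏ j ∈ Finset.range p, (6+6*(j:ℤ))) = ∏ j ∈ Finset.range p, (2*(3*(1+(j:ℤ)))) from
      Finset.prod_congr rfl fun j _ => by ring, hpull 2 _, hpull 3 _, hWp]
  have hc2' : ∏ j ∈ Finset.range p, (2+2*(j:ℤ)) = 2^p * (W * (p:ℤ)) := by
    rw [show (∏ j ∈ Finset.range p, (2+2*(j:ℤ))) = ∏ j ∈ Finset.range p, (2*(1+(j:ℤ))) from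
      Finset.prod_congr rfl fun j _ => by ring, hpull 2 _, hWp]
  have hc1' : ∏ j ∈ Finset.range p, (1+2*(j:ℤ)) = (p:ℤ) * Od := by
    rw [herase 1 2 jh hjhlt, ← hOd]
    congr 1
    exact_mod_cast hjhp
  -- the (6p)! identity
  have hclass : ∏ x ∈ Finset.range (6*p), ((x:ℤ)+1)
      = ((p:ℤ)*A6) * (2^p*((p:ℤ)*A3)) * (3^p*((p:ℤ)*Od)) * (2^p*((2*(p:ℤ))*A3'))
        * ((5*(p:ℤ))*B5) * (2^p*(3^p*(W*(p:ℤ)))) := by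
    rw [prod_grp 6 _ p]
    have hexp : ∀ j : ℕ, j ∈ Finset.range p → (∏ r ∈ Finset.range 6, (((6*j+r : ℕ):ℤ)+1))
        = (1+6*(j:ℤ))*((2+6*(j:ℤ))*((3+6*(j:ℤ))*((4+6*(j:ℤ))*((5+6*(j:ℤ))*(6+6*(j:ℤ)))))) := by
      intro j _
      simp only [Finset.prod_range_succ, Finset.prod_range_zero]
      push_cast
      ring
    rw [Finset.prod_congr rfl hexp]
    simp only [Finset.prod_mul_distrib]
    rw [hc1, hc2, hc3, hc4, hc5, hc6]
    ring
  have hblock : ∏ x ∈ Finset.range (6*p), ((x:ℤ)+1)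
      = (Bl 0*((p:ℤ)*1)) * (Bl 1*((p:ℤ)*2)) * (Bl 2*((p:ℤ)*3)) * (Bl 3*((p:ℤ)*4))
        * (Bl 4*((p:ℤ)*5)) * (Bl 5*((p:ℤ)*6)) := by
    rw [show 6*p = p*6 by ring, prod_grp p _ 6,
      Finset.prod_congr rfl (fun k _ => hinner k)]
    simp only [Finset.prod_range_succ, Finset.prod_range_zero]
    push_cast
    ring
  have he6 : 10 * 2^p * 2^p * 2^p * 3^p * 3^p * (A6*A3*Od*A3'*B5*W)
      = 720 * (Bl 0 * Bl 1 * Bl 2 * Bl 3 * Bl 4 * Bl 5) := by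
    apply mul_left_cancel₀ (pow_ne_zero 6 hpz)
    linear_combination hclass.symm.trans hblock
  -- the (2p)! identity
  have hclass2 : ∏ x ∈ Finset.range (2*p), ((x:ℤ)+1)
      = ((p:ℤ)*Od) * (2^p*(W*(p:ℤ))) := by
    rw [prod_grp 2 _ p]
    have hexp : ∀ j : ℕ, j ∈ Finset.range p → (∏ r ∈ Finset.range 2, (((2*j+r : ℕ):ℤ)+1))
        = (1+2*(j:ℤ))*(2+2*(j:ℤ)) := by
      intro j _
      simp only [Finset.prod_range_succ, Finset.prod_range_zero]
      push_cast
      ring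
    rw [Finset.prod_congr rfl hexp]
    simp only [Finset.prod_mul_distrib]
    rw [hc1', hc2']
  have hblock2 : ∏ x ∈ Finset.range (2*p), ((x:ℤ)+1)
      = (Bl 0*((p:ℤ)*1)) * (Bl 1*((p:ℤ)*2)) := by
    rw [show 2*p = p*2 by ring, prod_grp p _ 2,
      Finset.prod_congr rfl (fun k _ => hinner k)]
    simp only [Finset.prod_range_succ, Finset.prod_range_zero]
    push_cast
    ring
  have he2 : 2^p * (Od * W) = 2 * (Bl 0 * Bl 1) := by
    apply mul_left_cancel₀ (pow_ne_zero 2 hpz)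
    linear_combination hclass2.symm.trans hblock2
  -- the squared congruence mod p^2
  set X23 : ℤ := 2^P1 * 3^P1 * A6 * A3 with hX23
  -- mod p values
  have hA6modp : ((A6 : ℤ) : ZMod p) = -1 := by
    have h := int_prod_mod (p:=p) 1 6 j6 hd6 hj6lt ⟨1, by omega⟩
    rw [← hs6] at h
    rw [hA6]
    push_cast at h ⊢
    refine Eq.trans ?_ h
    exact Finset.prod_congr rfl fun j _ => by ring
  have hA3modp : ((A3 : ℤ) : ZMod p) = -1 := by
    have h := int_prod_mod (p:=p) 1 3 j3 hd3 hj3lt ⟨1, by omega⟩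
    rw [← hs3] at h
    rw [hA3]
    push_cast at h ⊢
    refine Eq.trans ?_ h
    exact Finset.prod_congr rfl fun j _ => by ring
  have hOdmodp : ((Od : ℤ) : ZMod p) = -1 := by
    have h := int_prod_mod (p:=p) 1 2 jh hd2 hjhlt ⟨1, by omega⟩
    rw [hOd]
    push_cast at h ⊢
    refine Eq.trans ?_ h
    exact Finset.prod_congr rfl fun j _ => by ring
  have hWmodp : ((W : ℤ) : ZMod p) = -1 := by
    have h := int_prod_mod (p:=p) 1 1 (p-1) hd1 (by omega) ⟨1, by omega⟩
    rw [hrangeP1] at h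
    rw [hW]
    push_cast at h ⊢
    refine Eq.trans ?_ h
    exact Finset.prod_congr rfl fun i _ => by ring
  have h2ne : (2:ZMod p) ≠ 0 := by
    intro hc
    have h0 : ((2:ℕ):ZMod p) = 0 := by exact_mod_cast hc
    rw [ZMod.natCast_eq_zero_iff] at h0
    exact hd2 h0
  have h3ne : (3:ZMod p) ≠ 0 := by
    intro hc
    have h0 : ((3:ℕ):ZMod p) = 0 := by exact_mod_cast hc
    rw [ZMod.natCast_eq_zero_iff] at h0
    exact hd3 h0
  have hX23modp : ((X23 : ℤ) : ZMod p) = 1 := by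
    rw [hX23]
    push_cast
    rw [hA6modp, hA3modp, hP1def, ZMod.pow_card_sub_one_eq_one h2ne,
      ZMod.pow_card_sub_one_eq_one h3ne]
    ring
  -- units mod p^2
  have hOdndvd : ¬ (p:ℤ) ∣ Od := by
    intro hdd
    have h0 : ((Od:ℤ):ZMod p) = 0 := by rw [ZMod.intCast_zmod_eq_zero_iff_dvd]; exact_mod_cast hdd
    rw [hOdmodp] at h0
    exact (neg_ne_zero.2 one_ne_zero) h0
  have hWndvd : ¬ (p:ℤ) ∣ W := by
    intro hdd
    have h0 : ((W:ℤ):ZMod p) = 0 := by rw [ZMod.intCast_zmod_eq_zero_iff_dvd]; exact_mod_cast hdd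
    rw [hWmodp] at h0
    exact (neg_ne_zero.2 one_ne_zero) h0
  have hu2 : IsUnit ((2:ZMod (p^2))) := by
    have h := isUnit_cast (p:=p) (x := 2) (by
      intro hh
      have : p ∣ 2 := by exact_mod_cast hh
      exact hd2 this)
    exact_mod_cast h
  have hu720 : IsUnit ((720:ZMod (p^2))) := by
    have h := isUnit_cast (p:=p) (x := 720) (by
      intro hh
      have h7 : p ∣ 720 := by exact_mod_cast hh
      have h16 : p ∣ 16 * 45 := by rwa [show (16*45 : ℕ) = 720 from rfl]
      rcases (Nat.Prime.dvd_mul hp).1 h16 with hh2 | hh2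
      · exact hd2 (hp.dvd_of_dvd_pow (n := 4) (by rwa [show (16:ℕ) = 2^4 from rfl] at hh2))
      · rcases (Nat.Prime.dvd_mul hp).1 (by rwa [show (45:ℕ) = 9*5 from rfl] at hh2) with h9 | h5
        · exact hd3 (hp.dvd_of_dvd_pow (n := 2) (by rwa [show (9:ℕ) = 3^2 from rfl] at h9))
        · exact (hnd 5 (by norm_num) (by omega)) h5)
    exact_mod_cast h
  have huOd : IsUnit ((Od : ℤ) : ZMod (p^2)) := isUnit_cast hOdndvd
  have huW : IsUnit ((W : ℤ) : ZMod (p^2)) := isUnit_cast hWndvd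
  have hsq : ((X23^2 : ℤ) : ZMod (p^2)) = (((W^2)^2 : ℤ) : ZMod (p^2)) := by
    have he6R := congrArg (fun z : ℤ => (z : ZMod (p^2))) he6
    have he2R := congrArg (fun z : ℤ => (z : ZMod (p^2))) he2
    push_cast at he6R he2R
    simp only [hBlR 0, hBlR 1, hBlR 2, hBlR 3, hBlR 4, hBlR 5, hB5R, hA3'R] at he6R
    simp only [hBlR 0, hBlR 1] at he2R
    have hcomb := congrArg₂ (fun x y : ZMod (p^2) => x * y) he6R he2R.symm
    have hxp : ∀ x : ZMod (p^2), x^p = x * x^P1 := fun x =>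
      (congrArg (fun t => x ^ t) hP1).trans ((pow_succ x P1).trans (mul_comm _ _))
    simp only [hxp] at hcomb
    have hu : IsUnit ((720:ZMod (p^2)) * (2*(2:ZMod (p^2))^P1)
        * ((Od : ℤ) : ZMod (p^2)) * ((W : ℤ) : ZMod (p^2))^3) :=
      ((hu720.mul (hu2.mul (hu2.pow P1))).mul huOd).mul (huW.pow 3)
    have hmain : ((720:ZMod (p^2)) * (2*(2:ZMod (p^2))^P1)
          * ((Od : ℤ) : ZMod (p^2)) * ((W : ℤ) : ZMod (p^2))^3)
          * (((2:ZMod (p^2))^P1 * 3^P1 * ((A6:ℤ) : ZMod (p^2)) * ((A3:ℤ) : ZMod (p^2)))^2)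
        = ((720:ZMod (p^2)) * (2*(2:ZMod (p^2))^P1)
          * ((Od : ℤ) : ZMod (p^2)) * ((W : ℤ) : ZMod (p^2))^3)
          * ((((W:ℤ) : ZMod (p^2))^2)^2) := by
      linear_combination hcomb
    have hsq' := hu.mul_left_cancel hmain
    have hX23c : ((X23 : ℤ) : ZMod (p^2))
        = (2:ZMod (p^2))^P1 * 3^P1 * ((A6:ℤ) : ZMod (p^2)) * ((A3:ℤ) : ZMod (p^2)) := by
      rw [hX23]
      push_cast
      rfl
    push_cast
    push_cast at hX23c
    rw [hX23c, hsq']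
  -- p^2 divides X23 - W^2
  have hdvdXW : (p:ℤ)^2 ∣ (X23 - W^2) := by
    have hdvd2 : (p:ℤ)^2 ∣ (X23^2 - (W^2)^2) := by
      have h0 : ((X23^2 - (W^2)^2 : ℤ) : ZMod (p^2)) = 0 := by
        push_cast
        push_cast at hsq
        rw [hsq]
        ring
      rw [ZMod.intCast_zmod_eq_zero_iff_dvd] at h0
      exact_mod_cast h0
    have hplus : ¬ (p:ℤ) ∣ (X23 + W^2) := by
      intro hdd
      have h0 : ((X23 + W^2 : ℤ) : ZMod p) = 0 := by
        rw [ZMod.intCast_zmod_eq_zero_iff_dvd]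
        exact hdd
      push_cast at h0
      push_cast at hX23modp hWmodp
      rw [hX23modp, hWmodp] at h0
      norm_num at h0
      have h2z : ((2:ℕ) : ZMod p) = 0 := by exact_mod_cast h0
      rw [ZMod.natCast_eq_zero_iff] at h2z
      exact hd2 h2z
    have hco : IsCoprime ((p:ℤ)^2) (X23 + W^2) :=
      (hpr.coprime_iff_not_dvd.2 hplus).pow_left
    have hfac : X23^2 - (W^2)^2 = (X23 - W^2) * (X23 + W^2) := by ring
    exact hco.dvd_of_dvd_mul_right (hfac ▸ hdvd2)
  -- relate N 0, Dh 0 to X23, W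
  have hN0 : N 0 = X23 := by
    simp only [hNdef, hX23]
    have hA : (∏ j ∈ s6, (1 + 6*(j:ℤ) + 6*(0:ℕ)*(p:ℤ))) = A6 := by
      rw [hA6]
      exact Finset.prod_congr rfl fun j _ => by push_cast; ring
    have hB : (∏ j ∈ s3, (1 + 3*(j:ℤ) + 3*(0:ℕ)*(p:ℤ))) = A3 := by
      rw [hA3]
      exact Finset.prod_congr rfl fun j _ => by push_cast; ring
    rw [hA, hB, show (6:ℤ) = 2*3 by norm_num, mul_pow]
  have hDh0 : Dh 0 = W := by
    simp only [hDhdef, hW]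
    exact Finset.prod_congr rfl fun i _ => by push_cast; ring
  have hDmodp : ∀ m:ℕ, ((Dh m : ℤ) : ZMod p) = -1 := by
    intro m
    have hcast : ((Dh m : ℤ) : ZMod p) = ∏ i ∈ Finset.range P1, ((1:ZMod p) + (i:ZMod p) + m*(p:ZMod p)) := by
      simp only [hDhdef]
      push_cast
      rfl
    rw [hcast]
    have hzz : (p : ZMod p) = 0 := by exact_mod_cast ZMod.natCast_self p
    have hstep : ∏ i ∈ Finset.range P1, ((1:ZMod p) + (i:ZMod p) + m*(p:ZMod p))
        = ∏ i ∈ Finset.range P1, ((1:ZMod p) + (i:ZMod p)) := by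
      refine Finset.prod_congr rfl fun i _ => ?_
      rw [hzz]
      ring
    rw [hstep]
    have hWc : ((W : ℤ) : ZMod p) = ∏ i ∈ Finset.range P1, ((1:ZMod p) + (i:ZMod p)) := by
      rw [hW]
      push_cast
      rfl
    rw [← hWc, hWmodp]
  -- conclusion
  constructor
  · have hnum : (p:ℤ)^2 ∣ (N n * Dh 0^2 - N 0 * Dh n^2) := by
      have h0 : ((N n * Dh 0^2 - N 0 * Dh n^2 : ℤ) : ZMod (p^2)) = 0 := by
        push_cast
        rw [hNR n, hDhR n, hDhR 0]
        ring
      rw [ZMod.intCast_zmod_eq_zero_iff_dvd] at h0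
      exact_mod_cast h0
    have hden : ¬ (p:ℤ) ∣ (Dh n^2 * Dh 0^2) := by
      intro hdd
      have h0 : ((Dh n^2 * Dh 0^2 : ℤ) : ZMod p) = 0 := by
        rw [ZMod.intCast_zmod_eq_zero_iff_dvd]
        exact_mod_cast hdd
      push_cast at h0
      rw [hDmodp n, hDmodp 0] at h0
      norm_num at h0
    have hsub : G n - G 0 = ((N n * Dh 0^2 - N 0 * Dh n^2 : ℤ) : ℚ) / ((Dh n^2 * Dh 0^2 : ℤ) : ℚ) := by
      rw [hGeq n, hGeq 0, div_sub_div _ _ (pow_ne_zero 2 (hDh_ne n)) (pow_ne_zero 2 (hDh_ne 0))]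
      push_cast
      congr 1
      ring
    rw [hsub]
    exact padic_norm_le hnum hden
  · have hnum2 : (p:ℤ)^2 ∣ (N 0 - Dh 0^2) := by
      rw [hN0, hDh0]
      exact hdvdXW
    have hden2 : ¬ (p:ℤ) ∣ (Dh 0^2) := by
      intro hdd
      have h0 : ((Dh 0^2 : ℤ) : ZMod p) = 0 := by
        rw [ZMod.intCast_zmod_eq_zero_iff_dvd]
        exact_mod_cast hdd
      push_cast at h0
      rw [hDmodp 0] at h0
      norm_num at h0
    have hsub2 : G 0 - 1 = ((N 0 - Dh 0^2 : ℤ) : ℚ) / ((Dh 0^2 : ℤ) : ℚ) := by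
      rw [hGeq 0]
      have hne := pow_ne_zero 2 (hDh_ne 0)
      push_cast
      rw [sub_div, div_self hne]
    rw [hsub2]
    exact padic_norm_le hnum2 hden2
end

section
/- For primes p > 3 and positive integers a ≥ b, the binomial coefficient C(pa, pb) is congruent to C(a, b) modulo p^3. -/
open Finset Nat



-- uniqueness of inverse
lemma inv_unique' {M : Type*} [CommMonoid M] {a x y : M} (hx : a * x = 1) (hy : a * y = 1) :
    x = y := by
  calc x = x * (a * y) := by rw [hy, mul_one]
  _ = (a * x) * y := by rw [mul_left_comm, mul_assoc]
  _ = y := by rw [hx, one_mul]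

lemma zmod_inv_mul {n : ℕ} {a b : ZMod n} (ha : IsUnit a) (hb : IsUnit b) :
    (a * b)⁻¹ = a⁻¹ * b⁻¹ := by
  refine inv_unique' (ZMod.mul_inv_of_unit _ (ha.mul hb)) ?_
  calc (a * b) * (a⁻¹ * b⁻¹) = (a * a⁻¹) * (b * b⁻¹) := by ring
  _ = 1 := by rw [ZMod.mul_inv_of_unit _ ha, ZMod.mul_inv_of_unit _ hb, one_mul]

lemma zmod_inv_add {n : ℕ} {a b : ZMod n} (ha : IsUnit a) (hb : IsUnit b) :
    a⁻¹ + b⁻¹ = (a + b) * (a * b)⁻¹ := by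
  rw [zmod_inv_mul ha hb]
  have h1 := ZMod.mul_inv_of_unit _ ha
  have h2 := ZMod.mul_inv_of_unit _ hb
  calc a⁻¹ + b⁻¹ = (b * b⁻¹) * a⁻¹ + (a * a⁻¹) * b⁻¹ := by rw [h1, h2]; ring
  _ = (a + b) * (a⁻¹ * b⁻¹) := by ring

lemma zmod_cast_inv {n m : ℕ} (h : m ∣ n) {a : ZMod n} (ha : IsUnit a) :
    (ZMod.castHom h (ZMod m)) a⁻¹ = ((ZMod.castHom h (ZMod m)) a)⁻¹ := by
  set f := ZMod.castHom h (ZMod m)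
  have hfa : IsUnit (f a) := ha.map f
  refine inv_unique' ?_ (ZMod.mul_inv_of_unit _ hfa)
  rw [← map_mul, ZMod.mul_inv_of_unit _ ha, map_one]

lemma zmod_isUnit_natCast {p i : ℕ} (k : ℕ) (hp : p.Prime) (hi : ¬ p ∣ i) :
    IsUnit ((i : ZMod (p ^ k))) := by
  rw [ZMod.isUnit_iff_coprime]
  exact Nat.Coprime.pow_right _ ((Nat.Prime.coprime_iff_not_dvd hp).mpr hi).symm

-- kernel of cast
lemma zmod_cast_eq_zero {n m : ℕ} [NeZero n] (h : m ∣ n) {x : ZMod n}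
    (hx : (ZMod.castHom h (ZMod m)) x = 0) : ∃ y : ZMod n, x = (m : ZMod n) * y := by
  have hv : ((x.val : ℕ) : ZMod m) = 0 := by
    rwa [ZMod.natCast_val, ← ZMod.castHom_apply (h := h)]
  rw [ZMod.natCast_eq_zero_iff] at hv
  obtain ⟨t, ht⟩ := hv
  refine ⟨(t : ZMod n), ?_⟩
  have : ((x.val : ℕ) : ZMod n) = x := by
    rw [ZMod.natCast_val, ZMod.cast_id]
  rw [← this, ht]
  push_cast
  ring

lemma sum_inv_sq_zmod (p : ℕ) [Fact p.Prime] (hp3 : 3 < p) :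
    ∑ x : ZMod p, (x ^ 2)⁻¹ = 0 := by
  have key : ∑ x : ZMod p, (x ^ 2)⁻¹ = ∑ x : ZMod p, x ^ 2 := by
    refine Finset.sum_nbij' (fun x => x⁻¹) (fun x => x⁻¹) ?_ ?_ ?_ ?_ ?_
    · intro x _; exact mem_univ _
    · intro x _; exact mem_univ _
    · intro x _; exact inv_inv x
    · intro x _; exact inv_inv x
    · intro x _
      simp [sq, mul_inv]
  rw [key]
  have : (2 : ℕ) < Fintype.card (ZMod p) - 1 := by
    rw [ZMod.card]; omega
  exact FiniteField.sum_pow_lt_card_sub_one (K := ZMod p) 2 this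
-- block lemma
lemma block_sum (p m : ℕ) [NeZero p] (F : ZMod p → ZMod p) :
    ∑ i ∈ range p, F ((1 : ZMod p) + (m : ZMod p) + (i : ZMod p)) = ∑ x : ZMod p, F x := by
  refine Finset.sum_nbij' (fun i => (1 : ZMod p) + (m : ZMod p) + (i : ZMod p))
    (fun x => (x - 1 - (m : ZMod p)).val) ?_ ?_ ?_ ?_ ?_
  · intro i _; exact mem_univ _
  · intro x _; exact mem_range.mpr (ZMod.val_lt _)
  · intro i hi
    have : ((1 : ZMod p) + (m : ZMod p) + (i : ZMod p) - 1 - (m : ZMod p)) = (i : ZMod p) := by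
      ring
    rw [this, ZMod.val_cast_of_lt (mem_range.mp hi)]
  · intro x _
    rw [ZMod.natCast_val, ZMod.cast_id]
    ring
  · intro i _; rfl

lemma range_sum_inv_sq (p : ℕ) [hpf : Fact p.Prime] (hp3 : 3 < p) (b : ℕ) :
    ∑ i ∈ range (p * b), (((1 + i : ℕ) : ZMod p) ^ 2)⁻¹ = 0 := by
  induction b with
  | zero => simp
  | succ b ih =>
    have hsplit : p * (b + 1) = p * b + p := by ring
    rw [hsplit, Finset.sum_range_add, ih, zero_add]
    have : ∀ i ∈ range p, (((1 + (p * b + i) : ℕ) : ZMod p) ^ 2)⁻¹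
        = (fun x : ZMod p => (x ^ 2)⁻¹) ((1 : ZMod p) + ((p*b : ℕ) : ZMod p) + (i : ZMod p)) := by
      intro i _; push_cast; ring_nf
    rw [Finset.sum_congr rfl this, block_sum p (p*b) (fun x : ZMod p => (x ^ 2)⁻¹)]
    exact sum_inv_sq_zmod p hp3

lemma sum_inv_sq_filter (p b : ℕ) [hpf : Fact p.Prime] (hp3 : 3 < p) :
    ∑ i ∈ (Ico 1 (p * b + 1)).filter (fun i => ¬ p ∣ i), (((i : ZMod p)) ^ 2)⁻¹ = 0 := by
  have hfilter : ∑ i ∈ (Ico 1 (p * b + 1)).filter (fun i => ¬ p ∣ i), (((i : ZMod p)) ^ 2)⁻¹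
      = ∑ i ∈ Ico 1 (p * b + 1), (((i : ZMod p)) ^ 2)⁻¹ := by
    refine Finset.sum_filter_of_ne ?_
    intro i _ hne hdvd
    apply hne
    rw [(ZMod.natCast_eq_zero_iff i p).mpr hdvd]
    simp
  rw [hfilter, Finset.sum_Ico_eq_sum_range]
  simp only [add_tsub_cancel_right]
  exact range_sum_inv_sq p hp3 b
lemma two_unit_zmod (p k : ℕ) (hp : p.Prime) (hp3 : 3 < p) : IsUnit (2 : ZMod (p ^ k)) := by
  have : ((2 : ℕ) : ZMod (p ^ k)) = 2 := by push_cast; ring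
  rw [← this, ZMod.isUnit_iff_coprime]
  refine Nat.Coprime.pow_right _ ?_
  rw [Nat.coprime_primes Nat.prime_two hp] <;> omega

lemma eq_zero_of_two_mul {n : ℕ} {x : ZMod n} (h2 : IsUnit (2 : ZMod n)) (h : 2 * x = 0) :
    x = 0 := by
  calc x = (2 : ZMod n)⁻¹ * (2 * x) := by
        rw [← mul_assoc, ZMod.inv_mul_of_unit _ h2, one_mul]
  _ = 0 := by rw [h, mul_zero]

lemma sum_inv_zmod_sq (p b : ℕ) [hpf : Fact p.Prime] (hp3 : 3 < p) :
    ∑ i ∈ (Ico 1 (p * b + 1)).filter (fun i => ¬ p ∣ i), ((i : ZMod (p ^ 2)))⁻¹ = 0 := by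
  have hp := hpf.out
  set s := (Ico 1 (p * b + 1)).filter (fun i => ¬ p ∣ i) with hs
  have hmem : ∀ i ∈ s, 1 ≤ i ∧ i < p * b ∧ ¬ p ∣ i := by
    intro i hi
    rw [hs, mem_filter, mem_Ico] at hi
    obtain ⟨⟨h1, h2⟩, h3⟩ := hi
    refine ⟨h1, ?_, h3⟩
    rcases lt_or_eq_of_le (Nat.lt_succ_iff.mp h2) with h | h
    · exact h
    · exact absurd (h ▸ Dvd.intro b rfl) h3
  have hmem' : ∀ i ∈ s, p * b - i ∈ s := by
    intro i hi
    obtain ⟨h1, h2, h3⟩ := hmem i hi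
    rw [hs, mem_filter, mem_Ico]
    refine ⟨⟨by omega, by omega⟩, fun hd => h3 ?_⟩
    have := Nat.dvd_sub (Dvd.intro b rfl) hd
    rwa [Nat.sub_sub_self (le_of_lt h2)] at this
  set S := ∑ i ∈ s, ((i : ZMod (p ^ 2)))⁻¹ with hS
  have hrev : S = ∑ i ∈ s, (((p * b - i : ℕ) : ZMod (p ^ 2)))⁻¹ := by
    rw [hS]
    refine Finset.sum_nbij' (fun i => p * b - i) (fun i => p * b - i) hmem' hmem' ?_ ?_ ?_
    · intro i hi; have := hmem i hi; omega
    · intro i hi; have := hmem i hi; omega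
    · intro i hi
      have h' := hmem i hi
      have heq : p * b - (p * b - i) = i := by omega
      rw [heq]
  set T := ∑ i ∈ s, ((i : ZMod (p ^ 2)) * ((p * b - i : ℕ) : ZMod (p ^ 2)))⁻¹ with hT
  have key : 2 * S = ((p * b : ℕ) : ZMod (p ^ 2)) * T := by
    calc 2 * S = S + S := by ring
    _ = ∑ i ∈ s, (((i : ZMod (p ^ 2)))⁻¹ + (((p * b - i : ℕ) : ZMod (p ^ 2)))⁻¹) := by
        rw [Finset.sum_add_distrib, ← hS, ← hrev]
    _ = ∑ i ∈ s, ((p * b : ℕ) : ZMod (p ^ 2)) * ((i : ZMod (p ^ 2)) * ((p * b - i : ℕ) : ZMod (p ^ 2)))⁻¹ := by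
        refine Finset.sum_congr rfl ?_
        intro i hi
        obtain ⟨h1, h2, h3⟩ := hmem i hi
        have hu1 : IsUnit ((i : ZMod (p ^ 2))) := zmod_isUnit_natCast 2 hp h3
        have hu2 : IsUnit (((p * b - i : ℕ) : ZMod (p ^ 2))) := by
          obtain ⟨_, _, h3'⟩ := hmem _ (hmem' i hi)
          exact zmod_isUnit_natCast 2 hp h3'
        rw [zmod_inv_add hu1 hu2, ← Nat.cast_add]
        congr 2
        omega
    _ = ((p * b : ℕ) : ZMod (p ^ 2)) * T := by rw [hT, Finset.mul_sum]
  -- T is divisible by p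
  haveI : NeZero (p ^ 2) := ⟨pow_ne_zero 2 hp.ne_zero⟩
  have hdvd2 : p ∣ p ^ 2 := dvd_pow_self p two_ne_zero
  have hcast : (ZMod.castHom hdvd2 (ZMod p)) T = 0 := by
    rw [hT, map_sum]
    have : ∀ i ∈ s, (ZMod.castHom hdvd2 (ZMod p)) (((i : ZMod (p ^ 2)) * ((p * b - i : ℕ) : ZMod (p ^ 2)))⁻¹)
        = -(((i : ZMod p)) ^ 2)⁻¹ := by
      intro i hi
      obtain ⟨h1, h2, h3⟩ := hmem i hi
      have hu1 : IsUnit ((i : ZMod (p ^ 2))) := zmod_isUnit_natCast 2 hp h3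
      have hu2 : IsUnit (((p * b - i : ℕ) : ZMod (p ^ 2))) := by
        obtain ⟨_, _, h3'⟩ := hmem _ (hmem' i hi)
        exact zmod_isUnit_natCast 2 hp h3'
      rw [zmod_cast_inv hdvd2 (hu1.mul hu2), map_mul, map_natCast, map_natCast]
      have hsub : (((p * b - i : ℕ) : ZMod p)) = -(i : ZMod p) := by
        rw [Nat.cast_sub (le_of_lt h2)]
        push_cast
        rw [ZMod.natCast_self]
        ring
      rw [hsub]
      rw [mul_neg, ← sq]
      rw [inv_neg]
    rw [Finset.sum_congr rfl this, Finset.sum_neg_distrib, sum_inv_sq_filter p b hp3, neg_zero]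
  obtain ⟨w, hw⟩ := zmod_cast_eq_zero hdvd2 hcast
  have h2S : 2 * S = 0 := by
    rw [key, hw]
    push_cast
    calc ((p : ZMod (p^2)) * (b : ZMod (p^2))) * ((p : ZMod (p^2)) * w)
        = (((p^2 : ℕ) : ZMod (p^2))) * ((b : ZMod (p^2)) * w) := by push_cast; ring
    _ = 0 := by rw [ZMod.natCast_self, zero_mul]
  exact eq_zero_of_two_mul (two_unit_zmod p 2 hp hp3) h2S
lemma prod_one_add {R : Type*} [CommRing R] (π : R) (hπ : π ^ 3 = 0) {ι : Type*}
    (s : Finset ι) (y : ι → R) :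
    ∃ e : R, (∏ i ∈ s, (1 + π * y i)) = 1 + π * (∑ i ∈ s, y i) + π ^ 2 * e ∧
      2 * e = (∑ i ∈ s, y i) ^ 2 - ∑ i ∈ s, (y i) ^ 2 := by
  classical
  induction s using Finset.induction_on with
  | empty => exact ⟨0, by simp, by simp⟩
  | insert a t ha ih =>
    obtain ⟨e, h1, h2⟩ := ih
    refine ⟨e + y a * (∑ i ∈ t, y i), ?_, ?_⟩
    · rw [Finset.prod_insert ha, Finset.sum_insert ha, h1]
      linear_combination (y a * e) * hπ
    · rw [Finset.sum_insert ha, Finset.sum_insert ha]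
      linear_combination h2

-- factorial product identity
lemma factorial_prod (m : ℕ) : ∀ k : ℕ, (m + k)! = m ! * ∏ i ∈ Ico 1 (k + 1), (m + i)
  | 0 => by simp
  | (k+1) => by
    rw [Finset.prod_Ico_succ_top (by omega : 1 ≤ k + 1)]
    rw [← mul_assoc, ← factorial_prod m k]
    rw [show m + (k+1) = (m + k) + 1 by ring, Nat.factorial_succ]
    ring

lemma prod_multiples (p b : ℕ) (hp : 0 < p) (f : ℕ → ℕ) :
    ∏ i ∈ (Ico 1 (p * b + 1)).filter (fun i => p ∣ i), f i
      = ∏ j ∈ Ico 1 (b + 1), f (p * j) := by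
  refine Finset.prod_nbij' (fun i => i / p) (fun j => p * j) ?_ ?_ ?_ ?_ ?_
  · intro i hi
    rw [mem_filter, mem_Ico] at hi
    obtain ⟨⟨h1, h2⟩, h3⟩ := hi
    rw [mem_Ico]
    constructor
    · exact (Nat.one_le_div_iff hp).mpr (Nat.le_of_dvd (by omega) h3)
    · have h4 : i / p ≤ p * b / p := Nat.div_le_div_right (by omega)
      rw [Nat.mul_div_cancel_left b hp] at h4
      omega
  · intro j hj
    rw [mem_Ico] at hj
    rw [mem_filter, mem_Ico]
    refine ⟨⟨Nat.mul_pos hp hj.1, ?_⟩, Dvd.intro j rfl⟩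
    have : p * j ≤ p * b := Nat.mul_le_mul_left p (by omega)
    omega
  · intro i hi
    rw [mem_filter] at hi
    exact Nat.mul_div_cancel' hi.2
  · intro j _
    exact Nat.mul_div_cancel_left j hp
  · intro i hi
    rw [mem_filter] at hi
    rw [Nat.mul_div_cancel' hi.2]
lemma choose_key_identity (p a b : ℕ) (hp : 0 < p) (hb : 0 < b) (hab : b ≤ a) :
    (p * a).choose (p * b) * ∏ i ∈ (Ico 1 (p * b + 1)).filter (fun i => ¬ p ∣ i), i
      = a.choose b * ∏ i ∈ (Ico 1 (p * b + 1)).filter (fun i => ¬ p ∣ i), (p * (a - b) + i) := by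
  set c := a - b with hc
  have hac : a = c + b := by omega
  set t := Ico 1 (p * b + 1) with ht
  set s := t.filter (fun i => ¬ p ∣ i) with hs2
  have split : ∀ f : ℕ → ℕ, ∏ i ∈ t, f i = (∏ j ∈ Ico 1 (b + 1), f (p * j)) * ∏ i ∈ s, f i := by
    intro f
    rw [← prod_multiples p b hp f, hs2, ht, Finset.prod_filter_mul_prod_filter_not]
  -- upper level: choose (p*a) (p*b) * (p*b)! = ∏ i in t, (p*c + i)
  have hpab : p * b ≤ p * a := Nat.mul_le_mul_left p hab
  have hsub : p * a - p * b = p * c := by rw [hc, Nat.mul_sub]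
  have e1 : (p * a).choose (p * b) * (p * b)! * (p * c)! = (p * c)! * ∏ i ∈ t, (p * c + i) := by
    calc (p * a).choose (p * b) * (p * b)! * (p * c)!
        = (p * a).choose (p * b) * (p * b)! * (p * a - p * b)! := by rw [hsub]
    _ = (p * a)! := Nat.choose_mul_factorial_mul_factorial hpab
    _ = (p * c + p * b)! := by rw [show p * a = p * c + p * b by omega]
    _ = (p * c)! * ∏ i ∈ t, (p * c + i) := factorial_prod (p * c) (p * b)
  have e1' : (p * a).choose (p * b) * (p * b)! = ∏ i ∈ t, (p * c + i) := by
    have hne : (p * c)! ≠ 0 := Nat.factorial_ne_zero _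
    apply Nat.eq_of_mul_eq_mul_left (Nat.pos_of_ne_zero hne)
    calc (p*c)! * ((p * a).choose (p * b) * (p * b)!)
        = (p * a).choose (p * b) * (p * b)! * (p * c)! := by ring
    _ = (p * c)! * ∏ i ∈ t, (p * c + i) := e1
  -- lower level
  have e2 : a.choose b * b ! = ∏ j ∈ Ico 1 (b + 1), (c + j) := by
    have hne : c ! ≠ 0 := Nat.factorial_ne_zero _
    apply Nat.eq_of_mul_eq_mul_left (Nat.pos_of_ne_zero hne)
    calc c ! * (a.choose b * b !) = a.choose b * b ! * (a - b)! := by rw [← hc]; ring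
    _ = a ! := Nat.choose_mul_factorial_mul_factorial hab
    _ = (c + b)! := by rw [← hac]
    _ = c ! * ∏ j ∈ Ico 1 (b + 1), (c + j) := factorial_prod c b
  -- factorial of p*b as product
  have e3 : (p * b)! = ∏ i ∈ t, i := by
    rw [ht]
    simpa using factorial_prod 0 (p * b)
  -- split the two products
  have e4 : ∏ i ∈ t, (p * c + i) = p ^ b * (∏ j ∈ Ico 1 (b + 1), (c + j)) * ∏ i ∈ s, (p * c + i) := by
    rw [split (fun i => p * c + i)]
    have : ∀ j ∈ Ico 1 (b + 1), p * c + p * j = p * (c + j) := by intro j _; ring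
    rw [Finset.prod_congr rfl this, Finset.prod_mul_distrib, Finset.prod_const, Nat.card_Ico]
    simp
  have e5 : ∏ i ∈ t, i = p ^ b * (∏ j ∈ Ico 1 (b + 1), j) * ∏ i ∈ s, i := by
    rw [split (fun i => i), Finset.prod_mul_distrib, Finset.prod_const, Nat.card_Ico]
    simp
  have e6 : (∏ j ∈ Ico 1 (b + 1), j) = b ! := Finset.prod_Ico_id_eq_factorial b
  -- combine
  have key : (p ^ b * b !) * ((p * a).choose (p * b) * ∏ i ∈ s, i)
      = (p ^ b * b !) * (a.choose b * ∏ i ∈ s, (p * c + i)) := by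
    calc (p ^ b * b !) * ((p * a).choose (p * b) * ∏ i ∈ s, i)
        = (p * a).choose (p * b) * (p ^ b * b ! * ∏ i ∈ s, i) := by ring
    _ = (p * a).choose (p * b) * (p ^ b * (∏ j ∈ Ico 1 (b + 1), j) * ∏ i ∈ s, i) := by rw [e6]
    _ = (p * a).choose (p * b) * ∏ i ∈ t, i := by rw [← e5]
    _ = (p * a).choose (p * b) * (p * b)! := by rw [← e3]
    _ = ∏ i ∈ t, (p * c + i) := e1'
    _ = p ^ b * (∏ j ∈ Ico 1 (b + 1), (c + j)) * ∏ i ∈ s, (p * c + i) := e4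
    _ = p ^ b * (a.choose b * b !) * ∏ i ∈ s, (p * c + i) := by rw [e2]
    _ = (p ^ b * b !) * (a.choose b * ∏ i ∈ s, (p * c + i)) := by ring
  have hpos : 0 < p ^ b * b ! := Nat.mul_pos (Nat.pow_pos hp) (Nat.factorial_pos b)
  exact Nat.eq_of_mul_eq_mul_left hpos key

/-- Jacobsthal–Kazandzidis: for primes `p > 3` and positive integers `a ≥ b`,
`C(pa, pb) ≡ C(a, b) (mod p^3)`. -/
theorem choose_mul_prime_cong (p a b : ℕ) (hp : p.Prime) (hp3 : 3 < p)
    (hb : 0 < b) (hab : b ≤ a) :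
    (p * a).choose (p * b) ≡ a.choose b [MOD p ^ 3] := by
  haveI hpf : Fact p.Prime := ⟨hp⟩
  haveI : NeZero (p ^ 3) := ⟨pow_ne_zero 3 hp.ne_zero⟩
  set Z := ZMod (p ^ 3) with hZ
  set c := a - b with hc
  set s := (Ico 1 (p * b + 1)).filter (fun i => ¬ p ∣ i) with hs
  have hu : ∀ i ∈ s, IsUnit ((i : Z)) := by
    intro i hi
    rw [hs, mem_filter] at hi
    exact zmod_isUnit_natCast 3 hp hi.2
  -- cast key identity
  have hkey := choose_key_identity p a b hp.pos hb hab
  have hcast : ((p * a).choose (p * b) : Z) * ∏ i ∈ s, (i : Z)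
      = (a.choose b : Z) * ∏ i ∈ s, ((p * c + i : ℕ) : Z) := by
    have := congrArg (Nat.cast : ℕ → Z) hkey
    rw [← Nat.cast_prod, ← Nat.cast_prod, ← Nat.cast_mul, ← Nat.cast_mul]
    exact this
  -- divisibilities
  have hdvd23 : p ^ 2 ∣ p ^ 3 := pow_dvd_pow p (by norm_num)
  have hdvd13 : p ∣ p ^ 3 := dvd_pow_self p three_ne_zero
  have hπ : (p : Z) ^ 3 = 0 := by
    rw [← Nat.cast_pow]
    exact ZMod.natCast_self _
  -- first moment sum
  have hS0 : (ZMod.castHom hdvd23 (ZMod (p ^ 2))) (∑ i ∈ s, ((i : Z))⁻¹) = 0 := by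
    rw [map_sum]
    have : ∀ i ∈ s, (ZMod.castHom hdvd23 (ZMod (p ^ 2))) (((i : Z))⁻¹)
        = ((i : ZMod (p ^ 2)))⁻¹ := by
      intro i hi
      rw [zmod_cast_inv hdvd23 (hu i hi), map_natCast]
    rw [Finset.sum_congr rfl this]
    exact sum_inv_zmod_sq p b hp3
  obtain ⟨w, hw⟩ := zmod_cast_eq_zero hdvd23 hS0
  -- second moment sum
  have hQ0 : (ZMod.castHom hdvd13 (ZMod p)) (∑ i ∈ s, ((i : Z))⁻¹ ^ 2) = 0 := by
    rw [map_sum]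
    have : ∀ i ∈ s, (ZMod.castHom hdvd13 (ZMod p)) (((i : Z))⁻¹ ^ 2)
        = (((i : ZMod p)) ^ 2)⁻¹ := by
      intro i hi
      rw [map_pow, zmod_cast_inv hdvd13 (hu i hi), map_natCast, inv_pow]
    rw [Finset.sum_congr rfl this]
    exact sum_inv_sq_filter p b hp3
  obtain ⟨u, hu2⟩ := zmod_cast_eq_zero hdvd13 hQ0
  -- expansion
  obtain ⟨e, hpe, h2e⟩ := prod_one_add (p : Z) hπ s (fun i => (c : Z) * ((i : Z))⁻¹)
  have hsum : (∑ i ∈ s, (c : Z) * ((i : Z))⁻¹) = (c : Z) * (((p ^ 2 : ℕ) : Z) * w) := by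
    rw [← Finset.mul_sum, hw]
  have hπS : (p : Z) * (∑ i ∈ s, (c : Z) * ((i : Z))⁻¹) = 0 := by
    rw [hsum]
    calc (p : Z) * ((c : Z) * (((p ^ 2 : ℕ) : Z) * w)) = ((p ^ 3 : ℕ) : Z) * ((c : Z) * w) := by
          push_cast; ring
    _ = 0 := by rw [ZMod.natCast_self, zero_mul]
  have hsq : (∑ i ∈ s, (c : Z) * ((i : Z))⁻¹) ^ 2 = 0 := by
    rw [hsum]
    calc ((c : Z) * (((p ^ 2 : ℕ) : Z) * w)) ^ 2
        = ((p ^ 3 : ℕ) : Z) * ((p : Z) * ((c : Z) ^ 2 * w ^ 2)) := by push_cast; ring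
    _ = 0 := by rw [ZMod.natCast_self, zero_mul]
  have hsum2 : (∑ i ∈ s, ((c : Z) * ((i : Z))⁻¹) ^ 2) = (c : Z) ^ 2 * ((p : Z) * u) := by
    have : ∀ i ∈ s, ((c : Z) * ((i : Z))⁻¹) ^ 2 = (c : Z) ^ 2 * ((i : Z))⁻¹ ^ 2 := by
      intro i _; ring
    rw [Finset.sum_congr rfl this, ← Finset.mul_sum, hu2]
  have hπ2e : (p : Z) ^ 2 * e = 0 := by
    refine eq_zero_of_two_mul (two_unit_zmod p 3 hp hp3) ?_
    calc 2 * ((p : Z) ^ 2 * e) = (p : Z) ^ 2 * (2 * e) := by ring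
    _ = (p : Z) ^ 2 * ((∑ i ∈ s, (c : Z) * ((i : Z))⁻¹) ^ 2
          - ∑ i ∈ s, ((c : Z) * ((i : Z))⁻¹) ^ 2) := by rw [h2e]
    _ = 0 := by
        rw [hsq, hsum2, zero_sub]
        calc (p : Z) ^ 2 * -((c : Z) ^ 2 * ((p : Z) * u)) = -((p : Z) ^ 3 * ((c : Z) ^ 2 * u)) := by
              ring
        _ = 0 := by rw [hπ, zero_mul, neg_zero]
  have hprod1 : (∏ i ∈ s, (1 + (p : Z) * ((c : Z) * ((i : Z))⁻¹))) = 1 := by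
    rw [hpe, hπS, hπ2e, add_zero, add_zero]
  -- P = Q in Z
  have hPQ : (∏ i ∈ s, ((p * c + i : ℕ) : Z)) = ∏ i ∈ s, (i : Z) := by
    have hterm : ∀ i ∈ s, ((p * c + i : ℕ) : Z) = (i : Z) * (1 + (p : Z) * ((c : Z) * ((i : Z))⁻¹)) := by
      intro i hi
      have h1 : (i : Z) * ((i : Z))⁻¹ = 1 := ZMod.mul_inv_of_unit _ (hu i hi)
      have : (i : Z) * (1 + (p : Z) * ((c : Z) * ((i : Z))⁻¹))
          = (i : Z) + (p : Z) * (c : Z) * ((i : Z) * ((i : Z))⁻¹) := by ring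
      rw [this, h1, mul_one]
      rw [Nat.cast_add, (Nat.cast_mul p c : ((p * c : ℕ) : ZMod (p ^ 3)) = _)]; ring
    rw [Finset.prod_congr rfl hterm, Finset.prod_mul_distrib, hprod1, mul_one]
  rw [hPQ] at hcast
  have hQunit : IsUnit (∏ i ∈ s, (i : Z)) :=
    Finset.prod_induction _ IsUnit (fun _ _ h1 h2 => h1.mul h2) isUnit_one hu
  rw [← ZMod.natCast_eq_natCast_iff]
  refine hQunit.mul_left_cancel ?_
  rw [mul_comm _ (((p * a).choose (p * b) : Z)), mul_comm _ ((a.choose b : Z))]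
  exact hcast
end
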